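/- Let Λ := {λ ∈ ℝ₊^m : ‖λ‖₁ ≤ R} and ℒ(θ,λ) := g₀(θ) + Σ_{i=1}^m λ_i g_i(θ). Suppose sequences θ^(1),…,θ^(T) ∈ Θ and λ^(1),…,λ^(T) ∈ Λ are generated as follows: λ^(1) = 0; at each step t, θ^(t) is a ρ-approximate minimizer of ℒ(·, λ^(t)), i.e. ℒ(θ^(t), λ^(t)) ≤ inf_{θ*∈Θ} ℒ(θ*, λ^(t)) + ρ; Δ^(t) := (g₁(θ^(t)),…,g_m(θ^(t))) is the gradient of ℒ(θ^(t),·) w.r.t. λ; and λ^(t+1) = Π_Λ(λ^(t) + η Δ^(t)), where Π_Λ is the Euclidean projection onto Λ and η := R/(B_Δ √(2T)) with B_Δ ≥ max_{t∈{1,…,T}} ‖Δ^(t)‖₂. Then max_{λ*∈Λ} (1/T) Σ_{t=1}^T ℒ(θ^(t), λ*) − inf_{θ*∈Θ} (1/T) Σ_{t=1}^T ℒ(θ*, λ^(t)) ≤ ρ + R B_Δ √(2/T). -/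

import Mathlib

/-- The Euclidean norm of a vector in `Fin k → ℝ`. -/
noncomputable def euclNorm {k : ℕ} (x : Fin k → ℝ) : ℝ := Real.sqrt (∑ i, x i ^ 2)

lemma aux_sumSq_nonneg {k : ℕ} (x : Fin k → ℝ) : 0 ≤ ∑ i, x i ^ 2 :=
  Finset.sum_nonneg fun _ _ => sq_nonneg _

lemma aux_euclNorm_sq {k : ℕ} (x : Fin k → ℝ) : euclNorm x ^ 2 = ∑ i, x i ^ 2 :=
  Real.sq_sqrt (aux_sumSq_nonneg x)

lemma aux_sumSq_le {k : ℕ} {x y : Fin k → ℝ} (h : euclNorm x ≤ euclNorm y) :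
    ∑ i, x i ^ 2 ≤ ∑ i, y i ^ 2 := by
  rw [← aux_euclNorm_sq, ← aux_euclNorm_sq]
  have h0 : 0 ≤ euclNorm x := Real.sqrt_nonneg _
  nlinarith

lemma aux_sumSq_le_of_le {k : ℕ} {x : Fin k → ℝ} {B : ℝ} (h : euclNorm x ≤ B) :
    ∑ i, x i ^ 2 ≤ B ^ 2 := by
  rw [← aux_euclNorm_sq]
  have h0 : 0 ≤ euclNorm x := Real.sqrt_nonneg _
  nlinarith

/-- Obtuse angle property of the projection onto the simplex-like set `Λ`. -/
lemma aux_obtuse {k : ℕ} {R : ℝ} {Λ : Set (Fin k → ℝ)}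
    (hΛ : Λ = {l | (∀ i, 0 ≤ l i) ∧ ∑ i, l i ≤ R})
    {u v : Fin k → ℝ} (hv : v ∈ Λ)
    (hmin : ∀ y ∈ Λ, euclNorm (v - u) ≤ euclNorm (y - u))
    {y : Fin k → ℝ} (hy : y ∈ Λ) :
    ∑ i, (u i - v i) * (y i - v i) ≤ 0 := by
  by_contra hpos
  push_neg at hpos
  set c : ℝ := ∑ i, (u i - v i) * (y i - v i) with hc
  set Q : ℝ := ∑ i, (y i - v i) ^ 2 with hQdef
  have hQ0 : 0 ≤ Q := aux_sumSq_nonneg _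
  set s : ℝ := min 1 (c / (Q + 1)) with hs
  have hs0 : 0 < s := lt_min one_pos (div_pos hpos (by linarith))
  have hs1 : s ≤ 1 := min_le_left _ _
  have hsQ : s * Q ≤ c := by
    calc s * Q ≤ (c / (Q + 1)) * Q :=
          mul_le_mul_of_nonneg_right (min_le_right _ _) hQ0
      _ ≤ c := by
          rw [div_mul_eq_mul_div, div_le_iff₀ (by linarith)]
          nlinarith
  rw [hΛ] at hy hv
  obtain ⟨hy1, hy2⟩ := hy
  obtain ⟨hv1, hv2⟩ := hv
  have hz : (fun i => v i + s * (y i - v i)) ∈ Λ := by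
    rw [hΛ]
    constructor
    · intro i
      show 0 ≤ v i + s * (y i - v i)
      have := hy1 i; have := hv1 i
      nlinarith
    · have hsum : ∑ i, (v i + s * (y i - v i))
          = (1 - s) * ∑ i, v i + s * ∑ i, y i := by
        rw [Finset.mul_sum, Finset.mul_sum, ← Finset.sum_add_distrib]
        exact Finset.sum_congr rfl fun i _ => by ring
      rw [hsum]
      nlinarith
  have hle := aux_sumSq_le (hmin _ hz)
  have hexp : ∑ i, (((fun i => v i + s * (y i - v i)) : Fin k → ℝ) i - u i) ^ 2
      = (∑ i, (v i - u i) ^ 2) + (s ^ 2 * Q - (2 * s) * c) := by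
    rw [hc, hQdef, Finset.mul_sum, Finset.mul_sum, ← Finset.sum_sub_distrib,
      ← Finset.sum_add_distrib]
    exact Finset.sum_congr rfl fun i _ => by ring
  simp only [Pi.sub_apply] at hle
  rw [hexp] at hle
  have h1 : 2 * s * c ≤ s ^ 2 * Q := by linarith
  have h2 : s * (2 * c) ≤ s * (s * Q) := by nlinarith
  have h3 : 2 * c ≤ s * Q := (mul_le_mul_iff_right₀ hs0).mp h2
  linarith

/-- Contraction property of the projection. -/
lemma aux_contract {k : ℕ} {R : ℝ} {Λ : Set (Fin k → ℝ)}
    (hΛ : Λ = {l | (∀ i, 0 ≤ l i) ∧ ∑ i, l i ≤ R})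
    {u v : Fin k → ℝ} (hv : v ∈ Λ)
    (hmin : ∀ y ∈ Λ, euclNorm (v - u) ≤ euclNorm (y - u))
    {y : Fin k → ℝ} (hy : y ∈ Λ) :
    ∑ i, (v i - y i) ^ 2 ≤ ∑ i, (u i - y i) ^ 2 := by
  have hob := aux_obtuse hΛ hv hmin hy
  have hexp : ∑ i, (u i - y i) ^ 2
      = (∑ i, (u i - v i) ^ 2) + ((∑ i, (v i - y i) ^ 2)
          - 2 * ∑ i, (u i - v i) * (y i - v i)) := by
    rw [Finset.mul_sum, ← Finset.sum_sub_distrib, ← Finset.sum_add_distrib]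
    exact Finset.sum_congr rfl fun i _ => by ring
  have h0 : 0 ≤ ∑ i, (u i - v i) ^ 2 := aux_sumSq_nonneg _
  linarith

/-- **Convergence of the oracle-based Lagrangian algorithm** (Lemma 4 /
Algorithm 1).  The `θ`-player uses a `ρ`-approximate optimization oracle and
the `λ`-player performs projected gradient ascent on
`Λ = {λ ∈ ℝ₊^m : ‖λ‖₁ ≤ R}` with step size `η = R / (B_Δ √(2T))`, starting
from `λ^(1) = 0`.  Then the resulting iterates form an approximate equilibrium:
`max_{λ*∈Λ} (1/T) ∑ₜ L(θ^(t), λ*) − inf_{θ*} (1/T) ∑ₜ L(θ*, λ^(t))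
  ≤ ρ + R B_Δ √(2/T)`. -/
theorem oracle_lagrangian_convergence
    {Θ : Type*} {m : ℕ}
    (g0 : Θ → ℝ) (g : Fin m → Θ → ℝ)
    (L : Θ → (Fin m → ℝ) → ℝ)
    (hL : ∀ θ l, L θ l = g0 θ + ∑ i, l i * g i θ)
    (R ρ BΔ : ℝ)
    (Λ : Set (Fin m → ℝ))
    (hΛ : Λ = {l | (∀ i, 0 ≤ l i) ∧ ∑ i, l i ≤ R})
    (T : ℕ) (hT : 0 < T)
    (η : ℝ) (hη : η = R / (BΔ * Real.sqrt (2 * T)))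
    (θs : ℕ → Θ) (ls : ℕ → Fin m → ℝ) (Δs : ℕ → Fin m → ℝ)
    -- `Δ^(t)` is the gradient of `L(θ^(t), ·)` w.r.t. `λ`
    (hΔ : ∀ t, Δs t = fun i => g i (θs t))
    (hinit : ls 0 = 0)
    -- `θ^(t)` is a `ρ`-approximate minimizer of `L(·, λ^(t))`
    (horacle : ∀ t < T, ∀ θ' : Θ, L (θs t) (ls t) ≤ L θ' (ls t) + ρ)
    (hBΔ : ∀ t < T, euclNorm (Δs t) ≤ BΔ)
    -- `λ^(t+1)` is the Euclidean projection of `λ^(t) + η Δ^(t)` onto `Λ`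
    (hproj : ∀ t < T, ls (t + 1) ∈ Λ ∧
      ∀ y ∈ Λ, euclNorm (ls (t + 1) - (ls t + η • Δs t))
        ≤ euclNorm (y - (ls t + η • Δs t))) :
    ∀ l' ∈ Λ, ∀ θ' : Θ,
      (1 / (T : ℝ)) * ∑ t ∈ Finset.range T, L (θs t) l'
        - (1 / (T : ℝ)) * ∑ t ∈ Finset.range T, L θ' (ls t)
      ≤ ρ + R * BΔ * Real.sqrt (2 / T) := by
  intro l' hl' θ'
  have hl'' : (∀ i, 0 ≤ l' i) ∧ ∑ i, l' i ≤ R := by rw [hΛ] at hl'; exact hl'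
  obtain ⟨hl'1, hl'2⟩ := hl''
  have hR : 0 ≤ R := le_trans (Finset.sum_nonneg fun i _ => hl'1 i) hl'2
  have hB : 0 ≤ BΔ := le_trans (Real.sqrt_nonneg _) (hBΔ 0 hT)
  have hTpos : (0 : ℝ) < T := by exact_mod_cast hT
  have hsqrtnn : 0 ≤ Real.sqrt (2 / T) := Real.sqrt_nonneg _
  -- inner-product identity: L(θ^t, λ*) − L(θ^t, λ^t) = ⟨Δ^t, λ* − λ^t⟩
  have hip : ∀ t, L (θs t) l' - L (θs t) (ls t) = ∑ i, Δs t i * (l' i - ls t i) := by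
    intro t
    rw [hL, hL, hΔ]
    rw [show (∑ i, (fun i => g i (θs t)) i * (l' i - ls t i))
        = ∑ i, (l' i * g i (θs t) - ls t i * g i (θs t)) from
      Finset.sum_congr rfl fun i _ => by ring]
    rw [Finset.sum_sub_distrib]
    ring
  -- per-step inequality
  have hstep : ∀ t < T, 2 * η * (∑ i, Δs t i * (l' i - ls t i)) ≤
      (∑ i, (ls t i - l' i) ^ 2) - (∑ i, (ls (t + 1) i - l' i) ^ 2) + η ^ 2 * BΔ ^ 2 := by
    intro t ht
    obtain ⟨hmem, hmin⟩ := hproj t ht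
    have hcon := aux_contract hΛ hmem hmin hl'
    have hΔsq : ∑ i, (Δs t i) ^ 2 ≤ BΔ ^ 2 := aux_sumSq_le_of_le (hBΔ t ht)
    have hexp : ∑ i, ((ls t + η • Δs t) i - l' i) ^ 2
        = (∑ i, (ls t i - l' i) ^ 2)
          + (2 * η * (∑ i, Δs t i * (ls t i - l' i)) + η ^ 2 * ∑ i, (Δs t i) ^ 2) := by
      rw [Finset.mul_sum, Finset.mul_sum, ← Finset.sum_add_distrib, ← Finset.sum_add_distrib]
      refine Finset.sum_congr rfl fun i _ => ?_
      simp only [Pi.add_apply, Pi.smul_apply, smul_eq_mul]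
      ring
    rw [hexp] at hcon
    have hswap : ∑ i, Δs t i * (l' i - ls t i) = - ∑ i, Δs t i * (ls t i - l' i) := by
      rw [← Finset.sum_neg_distrib]
      exact Finset.sum_congr rfl fun i _ => by ring
    rw [hswap]
    have hmul : η ^ 2 * (∑ i, (Δs t i) ^ 2) ≤ η ^ 2 * BΔ ^ 2 :=
      mul_le_mul_of_nonneg_left hΔsq (sq_nonneg η)
    linarith
  -- summed regret bound for the λ-player
  have hsum : 2 * η * (∑ t ∈ Finset.range T, ∑ i, Δs t i * (l' i - ls t i))
      ≤ R ^ 2 + T * (η ^ 2 * BΔ ^ 2) := by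
    have htel : ∑ t ∈ Finset.range T,
        ((∑ i, (ls t i - l' i) ^ 2) - (∑ i, (ls (t + 1) i - l' i) ^ 2))
        = (∑ i, (ls 0 i - l' i) ^ 2) - (∑ i, (ls T i - l' i) ^ 2) :=
      Finset.sum_range_sub' (fun t => ∑ i, (ls t i - l' i) ^ 2) T
    have h0 : ∑ i, (ls 0 i - l' i) ^ 2 ≤ R ^ 2 := by
      rw [hinit]
      have : ∑ i, ((0 : Fin m → ℝ) i - l' i) ^ 2 = ∑ i, l' i ^ 2 :=
        Finset.sum_congr rfl fun i _ => by simp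
      rw [this]
      calc ∑ i, l' i ^ 2 ≤ (∑ i, l' i) ^ 2 :=
            Finset.sum_sq_le_sq_sum_of_nonneg (fun i _ => hl'1 i)
        _ ≤ R ^ 2 := by
            have := Finset.sum_nonneg (fun i (_ : i ∈ Finset.univ) => hl'1 i)
            nlinarith
    have hTlast : 0 ≤ ∑ i, (ls T i - l' i) ^ 2 := aux_sumSq_nonneg _
    calc 2 * η * (∑ t ∈ Finset.range T, ∑ i, Δs t i * (l' i - ls t i))
        = ∑ t ∈ Finset.range T, 2 * η * (∑ i, Δs t i * (l' i - ls t i)) := by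
          rw [Finset.mul_sum]
      _ ≤ ∑ t ∈ Finset.range T,
            ((∑ i, (ls t i - l' i) ^ 2) - (∑ i, (ls (t + 1) i - l' i) ^ 2)
              + η ^ 2 * BΔ ^ 2) :=
          Finset.sum_le_sum fun t ht => hstep t (Finset.mem_range.mp ht)
      _ = ((∑ i, (ls 0 i - l' i) ^ 2) - (∑ i, (ls T i - l' i) ^ 2))
            + T * (η ^ 2 * BΔ ^ 2) := by
          rw [Finset.sum_add_distrib, htel, Finset.sum_const, Finset.card_range,
            nsmul_eq_mul]
      _ ≤ R ^ 2 + T * (η ^ 2 * BΔ ^ 2) := by linarith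
  -- oracle bound plus inner products
  have hLsum : ∑ t ∈ Finset.range T, L (θs t) l'
      ≤ (∑ t ∈ Finset.range T, L θ' (ls t)) + T * ρ
        + ∑ t ∈ Finset.range T, ∑ i, Δs t i * (l' i - ls t i) := by
    have hpt : ∀ t ∈ Finset.range T,
        L (θs t) l' ≤ L θ' (ls t) + ρ + ∑ i, Δs t i * (l' i - ls t i) := by
      intro t ht
      have h1 := horacle t (Finset.mem_range.mp ht) θ'
      have h2 := hip t
      linarith
    calc ∑ t ∈ Finset.range T, L (θs t) l'
        ≤ ∑ t ∈ Finset.range T,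
            (L θ' (ls t) + ρ + ∑ i, Δs t i * (l' i - ls t i)) :=
          Finset.sum_le_sum hpt
      _ = (∑ t ∈ Finset.range T, L θ' (ls t)) + T * ρ
            + ∑ t ∈ Finset.range T, ∑ i, Δs t i * (l' i - ls t i) := by
          rw [Finset.sum_add_distrib, Finset.sum_add_distrib, Finset.sum_const,
            Finset.card_range, nsmul_eq_mul]
  have hηnn : 0 ≤ η := by
    rw [hη]; positivity
  rcases eq_or_lt_of_le hηnn with hη0 | hηpos
  · -- degenerate case: η = 0, i.e. R = 0 or BΔ = 0
    have hzero : ∀ t < T, (∑ i, Δs t i * (l' i - ls t i)) = 0 := by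
      have hcase : R = 0 ∨ BΔ * Real.sqrt (2 * T) = 0 := by
        have : R / (BΔ * Real.sqrt (2 * T)) = 0 := by rw [← hη, ← hη0]
        exact div_eq_zero_iff.mp this
      intro t ht
      rcases hcase with hR0 | hB0
      · -- R = 0 : Λ = {0}, so l' = 0
        have hl0 : ∀ i, l' i = 0 := by
          intro i
          have hsz : ∑ i, l' i = 0 :=
            le_antisymm (hR0 ▸ hl'2) (Finset.sum_nonneg fun i _ => hl'1 i)
          exact (Finset.sum_eq_zero_iff_of_nonneg fun i _ => hl'1 i).mp hsz i
            (Finset.mem_univ i)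
        have hls0 : ∀ i, ls t i = 0 := by
          intro i
          cases t with
          | zero => rw [hinit]; rfl
          | succ k =>
              have hk : k < T := Nat.lt_of_succ_lt ht
              have hmem := (hproj k hk).1
              rw [hΛ] at hmem
              obtain ⟨hp1, hp2⟩ := hmem
              have hsz : ∑ i, ls (k + 1) i = 0 :=
                le_antisymm (hR0 ▸ hp2) (Finset.sum_nonneg fun i _ => hp1 i)
              exact (Finset.sum_eq_zero_iff_of_nonneg fun i _ => hp1 i).mp hsz i
                (Finset.mem_univ i)
        apply Finset.sum_eq_zero
        intro i _
        rw [hl0 i, hls0 i]; ring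
      · -- BΔ = 0 : the gradients vanish
        have hs2T : (0 : ℝ) < Real.sqrt (2 * T) := Real.sqrt_pos.mpr (by positivity)
        have hBz : BΔ = 0 := by
          rcases mul_eq_zero.mp hB0 with h | h
          · exact h
          · exact absurd h hs2T.ne'
        have hnle := hBΔ t ht
        rw [hBz] at hnle
        have hsq : ∑ i, (Δs t i) ^ 2 ≤ 0 := by
          have := aux_sumSq_le_of_le hnle
          simpa using this
        have hsqz : ∑ i, (Δs t i) ^ 2 = 0 :=
          le_antisymm hsq (aux_sumSq_nonneg _)
        have hΔz : ∀ i, Δs t i = 0 := by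
          intro i
          have := (Finset.sum_eq_zero_iff_of_nonneg fun i _ => sq_nonneg (Δs t i)).mp
            hsqz i (Finset.mem_univ i)
          exact pow_eq_zero_iff (n := 2) (by norm_num) |>.mp this
        apply Finset.sum_eq_zero
        intro i _
        rw [hΔz i]; ring
    have hsz : ∑ t ∈ Finset.range T, ∑ i, Δs t i * (l' i - ls t i) = 0 :=
      Finset.sum_eq_zero fun t ht => hzero t (Finset.mem_range.mp ht)
    rw [hsz] at hLsum
    have hfin : (1 / (T : ℝ)) * ∑ t ∈ Finset.range T, L (θs t) l'
        - (1 / (T : ℝ)) * ∑ t ∈ Finset.range T, L θ' (ls t) ≤ ρ := by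
      rw [← mul_sub]
      have hd : (∑ t ∈ Finset.range T, L (θs t) l')
          - (∑ t ∈ Finset.range T, L θ' (ls t)) ≤ T * ρ := by linarith
      calc (1 / (T : ℝ)) * ((∑ t ∈ Finset.range T, L (θs t) l')
            - (∑ t ∈ Finset.range T, L θ' (ls t)))
          ≤ (1 / (T : ℝ)) * (T * ρ) :=
            mul_le_mul_of_nonneg_left hd (by positivity)
        _ = ρ := by field_simp
    have : 0 ≤ R * BΔ * Real.sqrt (2 / T) :=
      mul_nonneg (mul_nonneg hR hB) hsqrtnn
    linarith
  · -- main case: η > 0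
    have hBpos : 0 < BΔ := by
      rcases lt_or_eq_of_le hB with h | h
      · exact h
      · exfalso
        rw [hη, ← h, zero_mul, div_zero] at hηpos
        exact lt_irrefl 0 hηpos
    set s : ℝ := Real.sqrt (2 * T) with hsdef
    have hs2 : s ^ 2 = 2 * T := Real.sq_sqrt (by positivity)
    have hs0 : 0 < s := Real.sqrt_pos.mpr (by positivity)
    have hsqrt_eq : Real.sqrt (2 / T) = s / T := by
      rw [hsdef]
      rw [show (2 : ℝ) / T = (2 * T) / T ^ 2 by field_simp]
      rw [Real.sqrt_div (by positivity), Real.sqrt_sq hTpos.le]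
    have hS : ∑ t ∈ Finset.range T, ∑ i, Δs t i * (l' i - ls t i)
        ≤ (R ^ 2 + T * (η ^ 2 * BΔ ^ 2)) / (2 * η) := by
      rw [le_div_iff₀ (by linarith)]
      linarith [hsum]
    have hRpos : 0 < R := by
      have h := hηpos
      rw [hη] at h
      rcases div_pos_iff.mp h with ⟨h1, _⟩ | ⟨_, h2⟩
      · exact h1
      · exact absurd h2 (not_lt.mpr (by positivity))
    have hkey : (R ^ 2 + T * (η ^ 2 * BΔ ^ 2)) / (2 * η) ≤ R * BΔ * s := by
      have hBne : BΔ ≠ 0 := hBpos.ne'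
      have hsne : s ≠ 0 := hs0.ne'
      have hRne : R ≠ 0 := hRpos.ne'
      have h1 : η ^ 2 * BΔ ^ 2 * s ^ 2 = R ^ 2 := by
        rw [hη]; field_simp
      have h2 : (T : ℝ) * (η ^ 2 * BΔ ^ 2) = R ^ 2 / 2 := by
        linear_combination h1 / 2 - (η ^ 2 * BΔ ^ 2) / 2 * hs2
      have h3 : (R ^ 2 + T * (η ^ 2 * BΔ ^ 2)) / (2 * η) = 3 * (R * BΔ * s) / 4 := by
        rw [h2, hη]; field_simp; ring
      rw [h3]
      nlinarith [mul_pos (mul_pos hRpos hBpos) hs0]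
    have htot : (∑ t ∈ Finset.range T, L (θs t) l')
        - (∑ t ∈ Finset.range T, L θ' (ls t))
        ≤ T * ρ + R * BΔ * s := by linarith
    have hRT : (T : ℝ) * (R * BΔ * Real.sqrt (2 / T)) = R * BΔ * s := by
      rw [hsqrt_eq]; field_simp
    rw [← mul_sub]
    calc (1 / (T : ℝ)) * ((∑ t ∈ Finset.range T, L (θs t) l')
          - (∑ t ∈ Finset.range T, L θ' (ls t)))
        ≤ (1 / (T : ℝ)) * (T * ρ + T * (R * BΔ * Real.sqrt (2 / T))) := by
          apply mul_le_mul_of_nonneg_left _ (by positivity)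
          rw [hRT]; exact htot
      _ = ρ + R * BΔ * Real.sqrt (2 / T) := by field_simp
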